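/- arXiv:0902.0342 — 2 statements merged into one kernel-verified Lean document; each statement's English description precedes it below -/
import Mathlib

section
/- Let Z = (Z_1,...,Z_T) be uniformly distributed on the T standard basis vectors (a multinomial with one trial and equal cell probabilities), independent of X = (X_1,...,X_T) where X_i has continuous strictly increasing CDF G_i. Define U = Π_{i=1}^T F_i(X_i)^{Z_i}. If (1/T)·Σ_{i=1}^T G_i(F_i^{-1}(p)) = p for all p ∈ (0,1), then U is uniformly distributed on (0,1). -/
open MeasureTheory ProbabilityTheory Set
open scoped ENNReal

/-- If `J` is uniform on the `T` indices, independent of `X = (X₁,…,X_T)` with `X i ∼ G i`,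
and the finite probabilistic calibration condition holds, then `U = F_J(X_J)` is uniformly
distributed on `(0,1)`. -/
theorem pit_uniform_of_calibrated
    (T : ℕ) (hT : 0 < T)
    (F G Finv : Fin T → ℝ → ℝ)
    (hFc : ∀ i, Continuous (F i)) (hFm : ∀ i, StrictMono (F i))
    (hGc : ∀ i, Continuous (G i)) (hGm : ∀ i, StrictMono (G i))
    (hFinv : ∀ i, ∀ p ∈ Ioo (0:ℝ) 1, F i (Finv i p) = p)
    (hcal : ∀ p ∈ Ioo (0:ℝ) 1, (1 / T : ℝ) * ∑ i, G i (Finv i p) = p)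
    {Ω : Type*} [MeasurableSpace Ω] (P : Measure Ω) [IsProbabilityMeasure P]
    (X : Fin T → Ω → ℝ) (hXmeas : ∀ i, Measurable (X i))
    (hX : ∀ i x, (P {ω | X i ω ≤ x}).toReal = G i x)
    (J : Ω → Fin T) (hJmeas : Measurable J)
    (hJ : ∀ i, P {ω | J ω = i} = (T : ℝ≥0∞)⁻¹)
    (hindep : IndepFun J (fun ω i => X i ω) P) :
    P.map (fun ω => F (J ω) (X (J ω) ω)) = volume.restrict (Ioo (0:ℝ) 1) := by
  have hTR : (0:ℝ) < T := by exact_mod_cast hT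
  set f : Ω → ℝ := fun ω => F (J ω) (X (J ω) ω) with hfdef
  -- basic facts about G
  have hPX : ∀ i x, P {ω | X i ω ≤ x} = ENNReal.ofReal (G i x) := by
    intro i x
    rw [← hX i x, ENNReal.ofReal_toReal (measure_ne_top _ _)]
  have hG0 : ∀ i x, 0 ≤ G i x := by
    intro i x; rw [← hX i x]; exact ENNReal.toReal_nonneg
  have hG1 : ∀ i x, G i x ≤ 1 := by
    intro i x; rw [← hX i x]
    exact ENNReal.toReal_le_of_le_ofReal zero_le_one (by simpa using prob_le_one)
  -- measurability of f
  have hfm : Measurable f := by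
    have : f = fun ω => ∑ i, if J ω = i then F i (X i ω) else 0 := by
      funext ω; simp [hfdef]
    rw [this]
    exact Finset.measurable_sum _ fun i _ =>
      Measurable.ite (hJmeas (measurableSet_singleton i))
        ((hFc i).measurable.comp (hXmeas i)) measurable_const
  -- sum identity
  have hsum : ∀ p ∈ Ioo (0:ℝ) 1, ∑ i, G i (Finv i p) = T * p := by
    intro p hp
    have := hcal p hp
    field_simp at this
    linarith [this]
  have hub : ∀ i, ∀ p ∈ Ioo (0:ℝ) 1, G i (Finv i p) ≤ T * p := by
    intro i p hp
    rw [← hsum p hp]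
    exact Finset.single_le_sum (f := fun j => G j (Finv j p)) (fun j _ => hG0 j _)
      (Finset.mem_univ i)
  have hlb : ∀ i, ∀ p ∈ Ioo (0:ℝ) 1, 1 - G i (Finv i p) ≤ T * (1 - p) := by
    intro i p hp
    have h1 : ∑ j ∈ Finset.univ.erase i, G j (Finv j p) ≤ (T - 1 : ℝ) := by
      calc ∑ j ∈ Finset.univ.erase i, G j (Finv j p)
          ≤ ∑ j ∈ Finset.univ.erase i, (1:ℝ) :=
            Finset.sum_le_sum fun j _ => hG1 j _
        _ = ((Finset.univ.erase i).card : ℝ) := by simp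
        _ = (T - 1 : ℝ) := by
            rw [Finset.card_erase_of_mem (Finset.mem_univ i)]
            simp [Nat.cast_sub hT]
    have h2 : G i (Finv i p) + ∑ j ∈ Finset.univ.erase i, G j (Finv j p) = T * p := by
      have h0 := hsum p hp
      rw [← Finset.add_sum_erase _ (fun j => G j (Finv j p)) (Finset.mem_univ i)] at h0
      exact h0
    nlinarith
  -- tail bounds
  have hlow : ∀ i, ∀ t : ℝ, t ≤ 0 → P {ω | F i (X i ω) ≤ t} = 0 := by
    intro i t ht
    have hb : ∀ ε : ℝ, 0 < ε → (P {ω | F i (X i ω) ≤ t}).toReal ≤ ε := by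
      intro ε hε
      set p : ℝ := min (ε / T) 1 / 2 with hp
      have hp0 : 0 < p := by positivity
      have hp1 : p < 1 := by
        have : min (ε / T) 1 ≤ 1 := min_le_right _ _
        linarith
      have hsub : {ω | F i (X i ω) ≤ t} ⊆ {ω | X i ω ≤ Finv i p} := by
        intro ω hω
        have : F i (X i ω) < F i (Finv i p) := by
          rw [hFinv i p ⟨hp0, hp1⟩]
          exact lt_of_le_of_lt (le_trans hω ht) hp0
        exact ((hFm i).lt_iff_lt.mp this).le
      have hle : P {ω | F i (X i ω) ≤ t} ≤ ENNReal.ofReal (G i (Finv i p)) := by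
        rw [← hPX]; exact measure_mono hsub
      have : (P {ω | F i (X i ω) ≤ t}).toReal ≤ G i (Finv i p) :=
        ENNReal.toReal_le_of_le_ofReal (hG0 _ _) hle
      have hTp : T * p ≤ ε := by
        have : min (ε / T) 1 ≤ ε / T := min_le_left _ _
        have h2 : T * p ≤ T * (ε / T / 2) := by
          apply mul_le_mul_of_nonneg_left _ hTR.le
          rw [hp]; linarith
        have h3 : (T:ℝ) * (ε / T / 2) = ε / 2 := by field_simp
        linarith
      linarith [hub i p ⟨hp0, hp1⟩]
    have h0 : (P {ω | F i (X i ω) ≤ t}).toReal = 0 :=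
      le_antisymm (le_of_forall_pos_le_add fun ε hε => by
        simpa using hb ε hε) ENNReal.toReal_nonneg
    exact (ENNReal.toReal_eq_zero_iff _).mp h0 |>.resolve_right (measure_ne_top _ _)
  have hhigh : ∀ i, ∀ t : ℝ, 1 ≤ t → P {ω | t < F i (X i ω)} = 0 := by
    intro i t ht
    have hb : ∀ ε : ℝ, 0 < ε → (P {ω | t < F i (X i ω)}).toReal ≤ ε := by
      intro ε hε
      set q : ℝ := min (ε / T) 1 / 2 with hq
      have hq0 : 0 < q := by positivity
      have hq1 : q < 1 := by
        have : min (ε / T) 1 ≤ 1 := min_le_right _ _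
        linarith
      set p : ℝ := 1 - q with hpq
      have hp0 : 0 < p := by simp [hpq]; linarith
      have hp1 : p < 1 := by simp [hpq]; linarith
      have hsub : {ω | t < F i (X i ω)} ⊆ {ω | X i ω ≤ Finv i p}ᶜ := by
        intro ω hω
        have : F i (Finv i p) < F i (X i ω) := by
          rw [hFinv i p ⟨hp0, hp1⟩]
          exact lt_trans (lt_of_lt_of_le hp1 ht) hω
        have := (hFm i).lt_iff_lt.mp this
        simp only [mem_compl_iff, mem_setOf_eq, not_le]
        exact this
      have hcmeas : MeasurableSet {ω | X i ω ≤ Finv i p} :=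
        (hXmeas i) measurableSet_Iic
      have hcompl : P ({ω | X i ω ≤ Finv i p}ᶜ) = ENNReal.ofReal (1 - G i (Finv i p)) := by
        rw [measure_compl hcmeas (measure_ne_top _ _), measure_univ, hPX,
          ← ENNReal.ofReal_one, ← ENNReal.ofReal_sub _ (hG0 _ _)]
      have hle : P {ω | t < F i (X i ω)} ≤ ENNReal.ofReal (1 - G i (Finv i p)) := by
        rw [← hcompl]; exact measure_mono hsub
      have h1 : (P {ω | t < F i (X i ω)}).toReal ≤ 1 - G i (Finv i p) :=
        ENNReal.toReal_le_of_le_ofReal (by linarith [hG1 i (Finv i p)]) hle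
      have hTp : T * (1 - p) ≤ ε := by
        have : min (ε / T) 1 ≤ ε / T := min_le_left _ _
        have h2 : T * q ≤ T * (ε / T / 2) := by
          apply mul_le_mul_of_nonneg_left _ hTR.le
          rw [hq]; linarith
        have h3 : (T:ℝ) * (ε / T / 2) = ε / 2 := by field_simp
        simp only [hpq, sub_sub_cancel]
        linarith
      linarith [hlb i p ⟨hp0, hp1⟩]
    have h0 : (P {ω | t < F i (X i ω)}).toReal = 0 :=
      le_antisymm (le_of_forall_pos_le_add fun ε hε => by
        simpa using hb ε hε) ENNReal.toReal_nonneg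
    exact (ENNReal.toReal_eq_zero_iff _).mp h0 |>.resolve_right (measure_ne_top _ _)
  -- key decomposition
  have hkey : ∀ t : ℝ, P.map f (Iic t) = ∑ i, (T:ℝ≥0∞)⁻¹ * P {ω | F i (X i ω) ≤ t} := by
    intro t
    rw [Measure.map_apply hfm measurableSet_Iic]
    have hdecomp : f ⁻¹' Iic t = ⋃ i, (J ⁻¹' {i}) ∩ {ω | F i (X i ω) ≤ t} := by
      ext ω
      simp only [mem_preimage, mem_Iic, mem_iUnion, mem_inter_iff, mem_singleton_iff,
        mem_setOf_eq]
      constructor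
      · intro h; exact ⟨J ω, rfl, h⟩
      · rintro ⟨i, hi, h⟩; rw [hfdef]; simp only; rw [hi]; exact h
    have hBmeas : ∀ i : Fin T, MeasurableSet {g : Fin T → ℝ | F i (g i) ≤ t} :=
      fun i => ((hFc i).measurable.comp (measurable_pi_apply i)) measurableSet_Iic
    have hmeas : ∀ i, MeasurableSet ((J ⁻¹' {i}) ∩ {ω | F i (X i ω) ≤ t}) := by
      intro i
      exact (hJmeas (measurableSet_singleton i)).inter
        (((hFc i).measurable.comp (hXmeas i)) measurableSet_Iic)
    have hdisj : Pairwise (Function.onFun Disjoint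
        fun i => (J ⁻¹' {i}) ∩ {ω | F i (X i ω) ≤ t}) := by
      intro i j hij
      refine Set.disjoint_left.mpr ?_
      rintro ω ⟨hi, -⟩ ⟨hj, -⟩
      exact hij (hi.symm.trans hj)
    rw [hdecomp, measure_iUnion hdisj hmeas, tsum_fintype]
    refine Finset.sum_congr rfl fun i _ => ?_
    have hYi : (J ⁻¹' {i}) ∩ {ω | F i (X i ω) ≤ t}
        = (J ⁻¹' {i}) ∩ ((fun ω (j : Fin T) => X j ω) ⁻¹' {g | F i (g i) ≤ t}) := rfl
    rw [hYi, hindep.measure_inter_preimage_eq_mul _ _ (measurableSet_singleton i) (hBmeas i)]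
    have : J ⁻¹' {i} = {ω | J ω = i} := rfl
    rw [this, hJ i]
    rfl
  -- conclude by extensionality on Iic
  haveI hmapprob : IsProbabilityMeasure (P.map f) := Measure.isProbabilityMeasure_map hfm.aemeasurable
  have hTne : (T:ℝ≥0∞) ≠ 0 := by exact_mod_cast hT.ne'
  have hTnetop : (T:ℝ≥0∞) ≠ ⊤ := ENNReal.natCast_ne_top T
  have hfinal : ∀ t : ℝ, P.map f (Iic t) = (volume.restrict (Ioo (0:ℝ) 1)) (Iic t) := by
    intro t
    rw [hkey t, Measure.restrict_apply measurableSet_Iic]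
    rcases le_or_gt t 0 with ht | ht
    · have : Iic t ∩ Ioo (0:ℝ) 1 = ∅ := by
        ext x; simp only [mem_inter_iff, mem_Iic, mem_Ioo, mem_empty_iff_false, iff_false]
        rintro ⟨h1, h2, -⟩; linarith
      rw [this, measure_empty]
      simp [hlow _ t ht]
    rcases lt_or_ge t 1 with ht1 | ht1
    · -- t ∈ (0,1)
      have htIoo : t ∈ Ioo (0:ℝ) 1 := ⟨ht, ht1⟩
      have hseteq : ∀ i, {ω | F i (X i ω) ≤ t} = {ω | X i ω ≤ Finv i t} := by
        intro i
        ext ω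
        simp only [mem_setOf_eq]
        have hFt : F i (Finv i t) = t := hFinv i t htIoo
        constructor
        · intro h; exact (hFm i).le_iff_le.mp (by rw [hFt]; exact h)
        · intro h; have := (hFm i).le_iff_le.mpr h; rwa [hFt] at this
      have hIic : Iic t ∩ Ioo (0:ℝ) 1 = Ioc 0 t := by
        ext x; simp only [mem_inter_iff, mem_Iic, mem_Ioo, mem_Ioc]
        constructor
        · rintro ⟨h1, h2, h3⟩; exact ⟨h2, h1⟩
        · rintro ⟨h1, h2⟩; exact ⟨h2, h1, lt_of_le_of_lt h2 ht1⟩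
      rw [hIic, Real.volume_Ioc]
      have : ∑ i, (T:ℝ≥0∞)⁻¹ * P {ω | F i (X i ω) ≤ t}
          = (T:ℝ≥0∞)⁻¹ * ENNReal.ofReal (∑ i, G i (Finv i t)) := by
        rw [ENNReal.ofReal_sum_of_nonneg fun i _ => hG0 i _, Finset.mul_sum]
        exact Finset.sum_congr rfl fun i _ => by rw [hseteq i, hPX]
      rw [this, hsum t htIoo, ENNReal.ofReal_mul hTR.le, ← mul_assoc]
      rw [ENNReal.ofReal_natCast, ENNReal.inv_mul_cancel hTne hTnetop, one_mul]
      simp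
    · -- t ≥ 1
      have hP1 : ∀ i, P {ω | F i (X i ω) ≤ t} = 1 := by
        intro i
        have hmeasi : MeasurableSet {ω | F i (X i ω) ≤ t} :=
          ((hFc i).measurable.comp (hXmeas i)) measurableSet_Iic
        have hcompl : {ω | F i (X i ω) ≤ t}ᶜ = {ω | t < F i (X i ω)} := by
          ext ω; simp [not_le]
        have := measure_compl hmeasi (measure_ne_top P _)
        rw [hcompl, hhigh i t ht1, measure_univ] at this
        have h2 : P {ω | F i (X i ω) ≤ t} ≤ 1 := prob_le_one
        have := tsub_eq_zero_iff_le.mp this.symm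
        exact le_antisymm h2 this
      have hIic : Iic t ∩ Ioo (0:ℝ) 1 = Ioo 0 1 := by
        ext x; simp only [mem_inter_iff, mem_Iic, mem_Ioo]
        exact ⟨fun h => h.2, fun h => ⟨le_trans h.2.le ht1, h⟩⟩
      rw [hIic, Real.volume_Ioo]
      simp only [hP1, mul_one, Finset.sum_const, Finset.card_univ, Fintype.card_fin,
        nsmul_eq_mul]
      rw [ENNReal.mul_inv_cancel hTne hTnetop]
      simp
  exact Measure.ext_of_Iic (P.map f) (volume.restrict (Ioo (0:ℝ) 1)) hfinal
end

section
/- Let F be a single continuous strictly increasing CDF (the climatological forecaster) and G_1,...,G_T continuous strictly increasing CDFs with finite second moments satisfying (1/T)·Σ_{i=1}^T G_i(F^{-1}(p)) = p for all p ∈ (0,1). Then Var(F) ≥ (1/T)·Σ_{i=1}^T Var(G_i), with equality if and only if all the G_i have the same mean. -/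
open MeasureTheory ProbabilityTheory Set
open scoped ENNReal

/-- Climatological forecaster: a single calibrated forecast distribution `F` (with law `μ`)
has variance at least the average variance of the true distributions `G i` (laws `ν i`),
with equality iff all the `G i` have the same mean. -/
theorem climatological_variance_ge_of_calibrated
    (T : ℕ) (hT : 0 < T)
    (F Finv : ℝ → ℝ) (G : Fin T → ℝ → ℝ)
    (μ : Measure ℝ) (ν : Fin T → Measure ℝ)
    [IsProbabilityMeasure μ] [∀ i, IsProbabilityMeasure (ν i)]
    (hFc : Continuous F) (hFm : StrictMono F)
    (hGc : ∀ i, Continuous (G i)) (hGm : ∀ i, StrictMono (G i))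
    (hμF : ∀ x, (μ (Iic x)).toReal = F x)
    (hνG : ∀ i x, (ν i (Iic x)).toReal = G i x)
    (hFinv : ∀ p ∈ Ioo (0:ℝ) 1, F (Finv p) = p)
    (hμ2 : MemLp id 2 μ) (hν2 : ∀ i, MemLp id 2 (ν i))
    (hcal : ∀ p ∈ Ioo (0:ℝ) 1, (1 / T : ℝ) * ∑ i, G i (Finv p) = p) :
    variance id μ ≥ (1 / T : ℝ) * ∑ i, variance id (ν i)
    ∧ (variance id μ = (1 / T : ℝ) * ∑ i, variance id (ν i)
        ↔ ∀ i j, (∫ x, x ∂(ν i)) = ∫ x, x ∂(ν j)) := by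
  have hT0 : (T : ℝ) ≠ 0 := Nat.cast_ne_zero.mpr hT.ne'
  have hTpos : (0:ℝ) < T := Nat.cast_pos.mpr hT
  -- F takes values in (0,1)
  have hF0 : ∀ x, 0 ≤ F x := fun x => (hμF x) ▸ ENNReal.toReal_nonneg
  have hFle : ∀ x, F x ≤ 1 := by
    intro x
    rw [← hμF x]
    have : μ (Iic x) ≤ 1 := (measure_mono (subset_univ _)).trans_eq measure_univ
    simpa using ENNReal.toReal_mono (by simp) this
  have hFpos : ∀ x, 0 < F x := fun x => (hF0 (x - 1)).trans_lt (hFm (by linarith))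
  have hFlt1 : ∀ x, F x < 1 := fun x => (hFm (lt_add_one x)).trans_le (hFle (x + 1))
  -- calibration pointwise : F x = average of G i x
  have hFeq : ∀ x, (1 / T : ℝ) * ∑ i, G i x = F x := by
    intro x
    have hmem : F x ∈ Ioo (0:ℝ) 1 := ⟨hFpos x, hFlt1 x⟩
    have h2 : Finv (F x) = x := hFm.injective (hFinv _ hmem)
    have := hcal _ hmem
    rwa [h2] at this
  have hGsum : ∀ x, ∑ i, G i x = (T : ℝ) * F x := by
    intro x
    have := hFeq x
    field_simp at this
    linarith [this]
  -- measure identity : ∑ ν i = T • μ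
  have hmeas : (∑ i, ν i) = (T : ℝ≥0∞) • μ := by
    haveI : IsFiniteMeasure (∑ i, ν i) := by
      constructor
      rw [Measure.finset_sum_apply]
      simp
    refine Measure.ext_of_Iic _ _ (fun x => ?_)
    rw [Measure.finset_sum_apply, Measure.smul_apply, smul_eq_mul]
    have h1 : (∑ i, ν i (Iic x)) ≠ ⊤ := by
      refine (ENNReal.sum_lt_top.mpr fun i _ => ?_).ne
      exact measure_lt_top _ _
    have h2 : (T : ℝ≥0∞) * μ (Iic x) ≠ ⊤ := by
      exact ENNReal.mul_ne_top (by simp) (measure_ne_top _ _)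
    rw [← ENNReal.toReal_eq_toReal_iff' h1 h2, ENNReal.toReal_sum (fun i _ => measure_ne_top _ _),
      ENNReal.toReal_mul]
    simp only [hνG, hμF, ENNReal.toReal_natCast]
    exact hGsum x
  -- integral identity
  have hint : ∀ f : ℝ → ℝ, (∀ i, Integrable f (ν i)) →
      ∫ x, f x ∂μ = (1 / T : ℝ) * ∑ i, ∫ x, f x ∂(ν i) := by
    intro f hf
    have h1 : ∫ x, f x ∂(∑ i, ν i) = ∑ i, ∫ x, f x ∂(ν i) :=
      integral_finset_sum_measure (fun i _ => hf i)
    rw [hmeas] at h1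
    rw [integral_smul_measure] at h1
    simp only [ENNReal.toReal_natCast, smul_eq_mul] at h1
    field_simp
    linarith [h1]
  -- means and second moments
  set m : Fin T → ℝ := fun i => ∫ x, x ∂(ν i) with hm
  set s : Fin T → ℝ := fun i => ∫ x, x ^ 2 ∂(ν i) with hs
  set mb : ℝ := (1 / T : ℝ) * ∑ i, m i with hmb
  have hint1 : ∫ x, x ∂μ = (1 / T : ℝ) * ∑ i, m i :=
    hint _ (fun i => ((hν2 i).integrable (by norm_num)))
  have hint2 : ∫ x, x ^ 2 ∂μ = (1 / T : ℝ) * ∑ i, s i := by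
    have := hint (fun x => x ^ 2) (fun i => by
      simpa [id] using (hν2 i).integrable_sq)
    simpa using this
  -- variance formulas
  have hvarμ : variance id μ = (1 / T : ℝ) * ∑ i, s i - mb ^ 2 := by
    rw [variance_eq_sub hμ2]
    simp only [Pi.pow_apply, id_eq]
    rw [show (∫ x, x ^ 2 ∂μ) = (1 / T : ℝ) * ∑ i, s i from hint2,
      show (∫ x, x ∂μ) = mb from hint1]
  have hvarν : ∀ i, variance id (ν i) = s i - m i ^ 2 := by
    intro i
    rw [variance_eq_sub (hν2 i)]
    simp only [Pi.pow_apply, id_eq]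
    rfl
  -- the key difference identity
  have hdiff : variance id μ - (1 / T : ℝ) * ∑ i, variance id (ν i)
      = (1 / T : ℝ) * ∑ i, (m i - mb) ^ 2 := by
    have hsum : ∑ i, (m i - mb) ^ 2 = ∑ i, m i ^ 2 - (T : ℝ) * mb ^ 2 := by
      have hTm : ∑ i, m i = (T : ℝ) * mb := by
        rw [hmb]; field_simp
      have : ∑ i, (m i - mb) ^ 2 = ∑ i, (m i ^ 2 - 2 * mb * m i + mb ^ 2) := by
        apply Finset.sum_congr rfl; intro i _; ring
      rw [this, Finset.sum_add_distrib, Finset.sum_sub_distrib, ← Finset.mul_sum, hTm]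
      simp [Finset.sum_const, Finset.card_univ]
      ring
    rw [hvarμ, hsum]
    have : ∑ i, variance id (ν i) = ∑ i, s i - ∑ i, m i ^ 2 := by
      rw [← Finset.sum_sub_distrib]
      exact Finset.sum_congr rfl (fun i _ => hvarν i)
    rw [this]
    field_simp
    try ring
  have hnn : (0:ℝ) ≤ ∑ i, (m i - mb) ^ 2 :=
    Finset.sum_nonneg (fun i _ => sq_nonneg _)
  constructor
  · have : (0:ℝ) ≤ (1 / T : ℝ) * ∑ i, (m i - mb) ^ 2 :=
      mul_nonneg (by positivity) hnn
    linarith [hdiff]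
  · constructor
    · intro heq
      have hzero : ∑ i, (m i - mb) ^ 2 = 0 := by
        have h1 : (1 / T : ℝ) * ∑ i, (m i - mb) ^ 2 = 0 := by linarith [hdiff]
        have h2 : (1 / T : ℝ) ≠ 0 := by positivity
        exact (mul_eq_zero.mp h1).resolve_left h2
      have hall : ∀ i ∈ Finset.univ, (m i - mb) ^ 2 = 0 := by
        intro i _
        exact (Finset.sum_eq_zero_iff_of_nonneg (fun i _ => sq_nonneg _)).mp hzero i
          (Finset.mem_univ i)
      intro i j
      have hi : m i = mb := by
        have := hall i (Finset.mem_univ i)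
        nlinarith [this]
      have hj : m j = mb := by
        have := hall j (Finset.mem_univ j)
        nlinarith [this]
      show m i = m j
      rw [hi, hj]
    · intro hmeans
      have i0 : Fin T := ⟨0, hT⟩
      have hmbi : mb = m i0 := by
        rw [hmb]
        have : ∑ i, m i = ∑ _i : Fin T, m i0 :=
          Finset.sum_congr rfl (fun i _ => hmeans i i0)
        rw [this]
        simp [Finset.sum_const, Finset.card_univ]
        field_simp
      have hzero : ∑ i, (m i - mb) ^ 2 = 0 := by
        apply Finset.sum_eq_zero
        intro i _
        have : m i = mb := by rw [hmbi]; exact hmeans i i0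
        rw [this]; ring
      have := hdiff
      rw [hzero] at this
      linarith
end
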